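/- arXiv:1106.0793 — 3 statements merged into one kernel-verified Lean document; each statement's English description precedes it below -/
import Mathlib

section
/- Fix integers k ≥ 2 and n ≥ 1. Let F_{k,n} be the family of k-term arithmetic progressions {a, a+d, ..., a+(k-1)d} contained in {1,2,...,n} whose common difference d satisfies n/k ≤ d < n/(k-1). Then F_{k,n} is an almost disjoint family: any two distinct progressions P, Q ∈ F_{k,n} satisfy |P ∩ Q| ≤ 1. -/
/-- The `k`-term arithmetic progression `{a, a+d, ..., a+(k-1)d}` as a finite set. -/
def AP (a d k : ℕ) : Finset ℕ := (Finset.range k).image (fun i => a + i * d)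

open Finset in
/-- `Fkn k n` is the family of `k`-term arithmetic progressions contained in
`{1, ..., n}` whose common difference `d` satisfies `n/k ≤ d < n/(k-1)`. -/
noncomputable def Fkn (k n : ℕ) : Finset (Finset ℕ) :=
  ((Finset.Icc 1 n ×ˢ Finset.Icc 1 n).filter
      (fun p => p.1 + (k - 1) * p.2 ≤ n ∧ (n : ℝ) / (k : ℝ) ≤ (p.2 : ℝ) ∧
        (p.2 : ℝ) < (n : ℝ) / ((k : ℝ) - 1))).image (fun p => AP p.1 p.2 k)

lemma mem_AP {x a d k : ℕ} : x ∈ AP a d k ↔ ∃ i < k, x = a + i * d := by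
  simp [AP, eq_comm]

lemma no_lt (k n p q d d' : ℕ) (hk : 2 ≤ k)
    (hpk : p ≤ k - 1) (hpq : p < q)
    (h2' : n ≤ k * d') (h3 : (k-1) * d < n)
    (he : p * d = q * d') : False := by
  have h1 : k * (p * d) = k * (q * d') := by rw [he]
  have h2 : k * (q * d') ≥ (p+1) * (k * d') := by
    have : (p+1) * (k * d') = k * ((p+1) * d') := by ring
    rw [this]
    exact Nat.mul_le_mul_left _ (Nat.mul_le_mul_right _ hpq)
  have h4 : (p+1) * (k * d') ≥ (p+1) * n := Nat.mul_le_mul_left _ h2'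
  have h5 : (p+1) * n > (p+1) * ((k-1) * d) :=
    Nat.mul_lt_mul_of_pos_left h3 (Nat.succ_pos p)
  have h6 : (p+1) * ((k-1) * d) ≥ k * (p * d) := by
    have : (p+1) * ((k-1)*d) = ((p+1)*(k-1)) * d := by ring
    rw [this]
    have : k * (p * d) = (k * p) * d := by ring
    rw [this]
    apply Nat.mul_le_mul_right
    obtain ⟨m, rfl⟩ : ∃ m, k = m + 1 := ⟨k - 1, by omega⟩
    simp only [Nat.add_sub_cancel]
    nlinarith
  omega

lemma key (k n a d a' d' : ℕ) (hk : 2 ≤ k) (hd : 1 ≤ d) (hd' : 1 ≤ d')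
    (ha : 1 ≤ a) (ha' : 1 ≤ a')
    (h1 : a + (k-1)*d ≤ n) (h2 : n ≤ k*d) (h3 : (k-1)*d < n)
    (h1' : a' + (k-1)*d' ≤ n) (h2' : n ≤ k*d') (h3' : (k-1)*d' < n)
    (x y : ℕ) (hxy : x < y)
    (hxP : x ∈ AP a d k) (hxQ : x ∈ AP a' d' k)
    (hyP : y ∈ AP a d k) (hyQ : y ∈ AP a' d' k) :
    AP a d k = AP a' d' k := by
  obtain ⟨i, hi, rfl⟩ := mem_AP.mp hxP
  obtain ⟨i', hi', hx'⟩ := mem_AP.mp hxQ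
  obtain ⟨j, hj, hy⟩ := mem_AP.mp hyP
  obtain ⟨j', hj', hy'⟩ := mem_AP.mp hyQ
  have hij : i < j := by
    by_contra h
    have : j * d ≤ i * d := Nat.mul_le_mul_right _ (by omega)
    omega
  have hij' : i' < j' := by
    by_contra h
    have : j' * d' ≤ i' * d' := Nat.mul_le_mul_right _ (by omega)
    omega
  set p := j - i with hp
  set q := j' - i' with hq
  have hjd : j * d = i * d + p * d := by
    have : j = i + p := by omega
    rw [this, add_mul]
  have hjd' : j' * d' = i' * d' + q * d' := by
    have : j' = i' + q := by omega
    rw [this, add_mul]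
  have hpq : p * d = q * d' := by omega
  have hpk : p ≤ k - 1 := by omega
  have hqk : q ≤ k - 1 := by omega
  have hpq2 : p = q := by
    rcases lt_trichotomy p q with h | h | h
    · exact absurd (no_lt k n p q d d' hk hpk h h2' h3 hpq) not_false
    · exact h
    · exact absurd (no_lt k n q p d' d hk hqk h h2 h3' hpq.symm) not_false
  have hdd : d = d' := by
    have hp0 : 0 < p := by omega
    have := hpq
    rw [hpq2] at this
    exact Nat.eq_of_mul_eq_mul_left (by omega) this
  subst hdd
  have hkd : d + (k-1)*d = k*d := by
    have : 1 + (k-1) = k := by omega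
    calc d + (k-1)*d = (1 + (k-1))*d := by ring
    _ = k * d := by rw [this]
  have haa : i = i' := by
    rcases lt_trichotomy i i' with h | h | h
    · exfalso
      have h7 : (i+1) * d ≤ i' * d := Nat.mul_le_mul_right _ (by omega)
      have h8 : (i+1) * d = i * d + d := by ring
      have ha1 : a ≥ 1 + d := by omega
      omega
    · exact h
    · exfalso
      have h7 : (i'+1) * d ≤ i * d := Nat.mul_le_mul_right _ (by omega)
      have h8 : (i'+1) * d = i' * d + d := by ring
      have ha1 : a' ≥ 1 + d := by omega
      omega
  subst haa
  have : a = a' := by omega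
  rw [this]

lemma mem_Fkn {k n : ℕ} (hk : 2 ≤ k) {P : Finset ℕ} (hP : P ∈ Fkn k n) :
    ∃ a d, 1 ≤ a ∧ 1 ≤ d ∧ a + (k-1)*d ≤ n ∧ n ≤ k*d ∧ (k-1)*d < n ∧ P = AP a d k := by
  simp only [Fkn, Finset.mem_image, Finset.mem_filter, Finset.mem_product,
    Finset.mem_Icc] at hP
  obtain ⟨⟨a, d⟩, ⟨⟨⟨ha1, _⟩, hd1, _⟩, hle, hlo, hhi⟩, rfl⟩ := hP
  refine ⟨a, d, ha1, hd1, hle, ?_, ?_, rfl⟩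
  · have hk0 : (0:ℝ) < (k:ℝ) := by positivity
    rw [div_le_iff₀ hk0] at hlo
    have : (n:ℝ) ≤ ((k*d : ℕ) : ℝ) := by push_cast; linarith
    exact_mod_cast this
  · have hk1 : (0:ℝ) < (k:ℝ) - 1 := by
      have : (2:ℝ) ≤ (k:ℝ) := by exact_mod_cast hk
      linarith
    rw [lt_div_iff₀ hk1] at hhi
    have : (((k-1)*d : ℕ) : ℝ) < (n:ℝ) := by
      push_cast [Nat.cast_sub (by omega : 1 ≤ k)]
      linarith
    exact_mod_cast this

/-- The family `F_{k,n}` is almost disjoint: any two distinct members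
intersect in at most one element. -/
theorem Fkn_almost_disjoint (k n : ℕ) (hk : 2 ≤ k) (hn : 1 ≤ n) :
    ∀ P ∈ Fkn k n, ∀ Q ∈ Fkn k n, P ≠ Q → (P ∩ Q).card ≤ 1 := by
  intro P hP Q hQ hne
  obtain ⟨a, d, ha, hd, h1, h2, h3, rfl⟩ := mem_Fkn hk hP
  obtain ⟨a', d', ha', hd', h1', h2', h3', rfl⟩ := mem_Fkn hk hQ
  rw [Finset.card_le_one]
  intro x hx y hy
  rw [Finset.mem_inter] at hx hy
  by_contra hxyne
  rcases lt_or_gt_of_ne hxyne with h | h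
  · exact hne (key k n a d a' d' hk hd hd' ha ha' h1 h2 h3 h1' h2' h3' x y h
      hx.1 hx.2 hy.1 hy.2)
  · exact hne (key k n a d a' d' hk hd hd' ha ha' h1 h2 h3 h1' h2' h3' y x h
      hy.1 hy.2 hx.1 hx.2)
end

section
/- Let s and k ≥ 2 be integers with s ≥ 2k, and let F be an almost disjoint family of k-element subsets of {1,...,s} with |F| ≤ 2^{k-1}. Then the number of functions c : {1,...,s} → {0,1} under which at least one member of F is monochromatic is at least |F| · 2^{s-k}. -/
open Finset

variable {α : Type*} [Fintype α] [DecidableEq α]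

/-- colorings monochromatic on `T` -/
def monoSet (T : Finset α) : Finset (α → Bool) :=
  Finset.univ.filter (fun c => ∀ x ∈ T, ∀ y ∈ T, c x = c y)

lemma mem_monoSet {T : Finset α} {c : α → Bool} :
    c ∈ monoSet T ↔ ∀ x ∈ T, ∀ y ∈ T, c x = c y := by simp [monoSet]

lemma monoSet_card (T : Finset α) (hT : T.Nonempty) :
    (monoSet T).card = 2 * 2 ^ (Fintype.card α - T.card) := by
  obtain ⟨t0, ht0⟩ := hT
  have h : (monoSet T).card = Fintype.card (Bool × ({x : α // x ∉ T} → Bool)) := by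
    rw [← Finset.card_univ]
    apply Finset.card_bij' (i := fun c _ => (c t0, fun x => c x.1))
      (j := fun p _ => fun x => if h : x ∈ T then p.1 else p.2 ⟨x, h⟩)
    · intro c hc
      rw [mem_monoSet] at hc
      funext x
      by_cases hx : x ∈ T
      · simp [hx, hc x hx t0 ht0]
      · simp [hx]
    · intro p _
      refine Prod.ext ?_ ?_
      · simp [ht0]
      · funext x
        simp [x.2]
    · intro c hc
      exact Finset.mem_univ _
    · intro p _
      rw [mem_monoSet]
      intro x hx y hy
      simp [hx, hy]
  rw [h, Fintype.card_prod, Fintype.card_bool, Fintype.card_fun, Fintype.card_bool,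
    Fintype.card_subtype_compl]
  simp

lemma monoSet_pair_card (T1 T2 : Finset α) {k : ℕ} (hk : 1 ≤ k)
    (h1 : T1.card = k) (h2 : T2.card = k) (hi : (T1 ∩ T2).card ≤ 1)
    (hn : 2 * k ≤ Fintype.card α) :
    (monoSet T1 ∩ monoSet T2).card ≤ 4 * 2 ^ (Fintype.card α - 2 * k) := by
  have hT1 : T1.Nonempty := Finset.card_pos.mp (by omega)
  have hT2 : T2.Nonempty := Finset.card_pos.mp (by omega)
  obtain ⟨t1, ht1⟩ := hT1
  obtain ⟨t2, ht2⟩ := hT2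
  rcases (T1 ∩ T2).eq_empty_or_nonempty with he | ⟨z, hz⟩
  · -- disjoint case: inject into Bool × Bool × functions off T1 ∪ T2
    have hdisj : Disjoint T1 T2 := Finset.disjoint_iff_inter_eq_empty.mpr he
    have hcu : (T1 ∪ T2).card = 2 * k := by
      rw [Finset.card_union_of_disjoint hdisj]; omega
    have hinj : Set.InjOn (fun c : α → Bool => (c t1, c t2, fun x : {x : α // x ∉ T1 ∪ T2} => c x.1))
        ↑(monoSet T1 ∩ monoSet T2) := by
      intro c hc c' hc' hEq
      simp only [Finset.coe_inter, Set.mem_inter_iff, Finset.mem_coe, mem_monoSet] at hc hc'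
      have e1 : c t1 = c' t1 := congrArg Prod.fst hEq
      have e2 : c t2 = c' t2 := congrArg (fun p => p.2.1) hEq
      have e3 : ∀ x : {x : α // x ∉ T1 ∪ T2}, c x.1 = c' x.1 :=
        fun x => congrFun (congrArg (fun p => p.2.2) hEq) x
      funext x
      by_cases hx1 : x ∈ T1
      · rw [hc.1 x hx1 t1 ht1, hc'.1 x hx1 t1 ht1]; exact e1
      by_cases hx2 : x ∈ T2
      · rw [hc.2 x hx2 t2 ht2, hc'.2 x hx2 t2 ht2]; exact e2
      · exact e3 ⟨x, fun h => (Finset.mem_union.mp h).elim hx1 hx2⟩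
    calc (monoSet T1 ∩ monoSet T2).card
        ≤ (Finset.univ : Finset (Bool × Bool × ({x : α // x ∉ T1 ∪ T2} → Bool))).card :=
          Finset.card_le_card_of_injOn _ (fun a _ => Finset.mem_univ _) hinj
      _ = 4 * 2 ^ (Fintype.card α - 2 * k) := by
          rw [Finset.card_univ, Fintype.card_prod, Fintype.card_prod, Fintype.card_bool,
            Fintype.card_fun, Fintype.card_bool, Fintype.card_subtype_compl]
          have hc2 : Fintype.card {x : α // x ∈ T1 ∪ T2} = 2 * k := by
            rw [← hcu]; convert Fintype.card_coe (T1 ∪ T2) using 2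
          rw [hc2]; ring
  · -- intersecting case
    have hzz := hz
    rw [Finset.mem_inter] at hz
    have hsub : monoSet T1 ∩ monoSet T2 ⊆ monoSet (T1 ∪ T2) := by
      intro c hc
      rw [Finset.mem_inter, mem_monoSet, mem_monoSet] at hc
      rw [mem_monoSet]
      intro x hx y hy
      have key : ∀ w ∈ T1 ∪ T2, c w = c z := by
        intro w hw
        rcases Finset.mem_union.mp hw with h | h
        · exact hc.1 w h z hz.1
        · exact hc.2 w h z hz.2
      rw [key x hx, key y hy]
    have hicard : (T1 ∩ T2).card = 1 := le_antisymm hi (Finset.card_pos.mpr ⟨z, hzz⟩)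
    have hucard : (T1 ∪ T2).card = 2 * k - 1 := by
      have := Finset.card_union_add_card_inter T1 T2
      omega
    calc (monoSet T1 ∩ monoSet T2).card ≤ (monoSet (T1 ∪ T2)).card := Finset.card_le_card hsub
      _ = 2 * 2 ^ (Fintype.card α - (2 * k - 1)) :=
          (monoSet_card _ ⟨z, Finset.mem_union_left _ hz.1⟩).trans (by rw [hucard])
      _ ≤ 4 * 2 ^ (Fintype.card α - 2 * k) := by
          have : Fintype.card α - (2 * k - 1) = (Fintype.card α - 2 * k) + 1 := by omega
          rw [this, pow_succ]; ring_nf; omega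

lemma bonferroni {ι β : Type*} [DecidableEq ι] [DecidableEq β] (S : Finset ι) (f : ι → Finset β) :
    2 * ∑ i ∈ S, (f i).card ≤
      2 * (S.biUnion f).card + ∑ p ∈ S.offDiag, ((f p.1 ∩ f p.2)).card := by
  induction S using Finset.induction_on with
  | empty => simp
  | @insert a s ha ih =>
    have hbu : (insert a s).biUnion f = f a ∪ s.biUnion f := Finset.biUnion_insert
    have hcu : (f a ∪ s.biUnion f).card + (f a ∩ s.biUnion f).card
        = (f a).card + (s.biUnion f).card := Finset.card_union_add_card_inter _ _
    have hint : (f a ∩ s.biUnion f).card ≤ ∑ i ∈ s, (f a ∩ f i).card := by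
      rw [Finset.inter_biUnion]
      exact Finset.card_biUnion_le
    have e1 : ∑ p ∈ ({a} ×ˢ s : Finset (ι × ι)), (f p.1 ∩ f p.2).card
        = ∑ i ∈ s, (f a ∩ f i).card := by
      rw [Finset.sum_product, Finset.sum_singleton]
    have e2 : ∑ p ∈ (s ×ˢ {a} : Finset (ι × ι)), (f p.1 ∩ f p.2).card
        = ∑ i ∈ s, (f i ∩ f a).card := by
      rw [Finset.sum_product]
      simp
    have hd1 : Disjoint (s.offDiag ∪ {a} ×ˢ s) (s ×ˢ {a}) := by
      rw [Finset.disjoint_left]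
      rintro ⟨p1, p2⟩ hp hq
      simp only [Finset.mem_product, Finset.mem_singleton] at hq
      rcases Finset.mem_union.mp hp with hp | hp
      · exact ha (hq.2 ▸ (Finset.mem_offDiag.mp hp).2.1)
      · simp only [Finset.mem_product, Finset.mem_singleton] at hp
        exact ha (hp.1 ▸ hq.1)
    have hd2 : Disjoint s.offDiag ({a} ×ˢ s : Finset (ι × ι)) := by
      rw [Finset.disjoint_left]
      rintro ⟨p1, p2⟩ hp hq
      simp only [Finset.mem_product, Finset.mem_singleton] at hq
      exact ha (hq.1 ▸ (Finset.mem_offDiag.mp hp).1)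
    have hod : ∑ p ∈ (insert a s).offDiag, (f p.1 ∩ f p.2).card
        = ∑ p ∈ s.offDiag, (f p.1 ∩ f p.2).card
          + ∑ i ∈ s, (f a ∩ f i).card + ∑ i ∈ s, (f i ∩ f a).card := by
      rw [Finset.offDiag_insert (has := ha), Finset.sum_union hd1, Finset.sum_union hd2, e1, e2]
    have hsum : ∑ i ∈ insert a s, (f i).card = (f a).card + ∑ i ∈ s, (f i).card :=
      Finset.sum_insert ha
    have hcomm : ∑ i ∈ s, (f i ∩ f a).card = ∑ i ∈ s, (f a ∩ f i).card := by
      simp_rw [Finset.inter_comm]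
    rw [hsum, hbu, hod, hcomm]
    omega

/-- For an almost disjoint family `F` of `k`-element subsets of `{1,...,s}` with
`|F| ≤ 2^(k-1)` (and `s ≥ 2k`, `k ≥ 2`), the number of 2-colorings of `{1,...,s}`
under which some member of `F` is monochromatic is at least `|F| · 2^(s-k)`. -/
theorem card_colorings_some_mono (s k : ℕ) (hk : 2 ≤ k) (hs : 2 * k ≤ s)
    (F : Finset (Finset ℕ)) (hsub : ∀ P ∈ F, P ⊆ Finset.Icc 1 s)
    (hcard : ∀ P ∈ F, P.card = k)
    (had : ∀ P ∈ F, ∀ Q ∈ F, P ≠ Q → (P ∩ Q).card ≤ 1)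
    (hF : F.card ≤ 2 ^ (k - 1)) :
    F.card * 2 ^ (s - k) ≤
      Nat.card {c : ↥(Finset.Icc 1 s) → Bool //
        ∃ P ∈ F, ∀ x y : ↥(Finset.Icc 1 s), (x : ℕ) ∈ P → (y : ℕ) ∈ P → c x = c y} := by
  classical
  have hn : Fintype.card ↥(Finset.Icc 1 s) = s := by
    rw [Fintype.card_coe, Nat.card_Icc]; omega
  -- the lift of P to a subset of α
  set T : Finset ℕ → Finset ↥(Finset.Icc 1 s) := fun P => Finset.univ.filter (fun x => (x : ℕ) ∈ P) with hT
  have hTcard : ∀ P ∈ F, (T P).card = k := by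
    intro P hP
    rw [← hcard P hP]
    apply Finset.card_bij (fun (x : ↥(Finset.Icc 1 s)) _ => (x : ℕ))
    · intro x hx
      simp only [hT, Finset.mem_filter] at hx
      exact hx.2
    · intro x _ y _ hxy
      exact Subtype.ext hxy
    · intro p hp
      exact ⟨⟨p, hsub P hP hp⟩, by simp [hT, hp], rfl⟩
  have hTinter : ∀ P Q : Finset ℕ, (T P ∩ T Q).card ≤ (P ∩ Q).card := by
    intro P Q
    apply Finset.card_le_card_of_injOn (fun x : ↥(Finset.Icc 1 s) => (x : ℕ))
    · intro x hx
      simp only [hT, Finset.coe_inter, Set.mem_inter_iff, Finset.mem_coe, Finset.mem_inter, Finset.mem_filter] at hx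
      simp [Finset.mem_inter, hx.1.2, hx.2.2]
    · intro x _ y _ hxy
      exact Subtype.ext hxy
  -- identify the Nat.card with the card of a biUnion
  set B : Finset (↥(Finset.Icc 1 s) → Bool) := F.biUnion (fun P => monoSet (T P)) with hB
  have hNat : Nat.card {c : ↥(Finset.Icc 1 s) → Bool //
      ∃ P ∈ F, ∀ x y : ↥(Finset.Icc 1 s), (x : ℕ) ∈ P → (y : ℕ) ∈ P → c x = c y} = B.card := by
    rw [Nat.card_eq_fintype_card, Fintype.card_subtype]
    congr 1
    ext c
    simp only [Finset.mem_filter, Finset.mem_univ, true_and, hB, Finset.mem_biUnion]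
    constructor
    · rintro ⟨P, hP, h⟩
      refine ⟨P, hP, ?_⟩
      rw [mem_monoSet]
      intro x hx y hy
      simp only [hT, Finset.mem_filter] at hx hy
      exact h x y hx.2 hy.2
    · rintro ⟨P, hP, h⟩
      rw [mem_monoSet] at h
      exact ⟨P, hP, fun x y hx hy => h x (by simp [hT, hx]) y (by simp [hT, hy])⟩
  rw [hNat]
  clear hNat
  -- Bonferroni
  have hbon := bonferroni F (fun P => monoSet (T P))
  have hsum : ∑ P ∈ F, (monoSet (T P)).card = F.card * (2 * 2 ^ (s - k)) := by
    have hc : ∀ P ∈ F, (monoSet (T P)).card = 2 * 2 ^ (s - k) := by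
      intro P hP
      rw [monoSet_card _ (Finset.card_pos.mp (by rw [hTcard P hP]; omega)), hTcard P hP, hn]
    rw [Finset.sum_congr rfl hc, Finset.sum_const, smul_eq_mul]
  have hpair : ∀ p ∈ F.offDiag, (monoSet (T p.1) ∩ monoSet (T p.2)).card
      ≤ 4 * 2 ^ (s - 2 * k) := by
    rintro ⟨P, Q⟩ hp
    rw [Finset.mem_offDiag] at hp
    have := monoSet_pair_card (T P) (T Q) (k := k) (by omega) (hTcard P hp.1) (hTcard Q hp.2.1)
      (le_trans (hTinter P Q) (had P hp.1 Q hp.2.1 hp.2.2)) (by omega)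
    rwa [hn] at this
  have hodsum : ∑ p ∈ F.offDiag, ((monoSet (T p.1) ∩ monoSet (T p.2))).card
      ≤ (F.card * F.card - F.card) * (4 * 2 ^ (s - 2 * k)) := by
    calc ∑ p ∈ F.offDiag, ((monoSet (T p.1) ∩ monoSet (T p.2))).card
        ≤ F.offDiag.card * (4 * 2 ^ (s - 2 * k)) :=
          Finset.sum_le_card_nsmul _ _ _ hpair
      _ = (F.card * F.card - F.card) * (4 * 2 ^ (s - 2 * k)) := by
          rw [Finset.offDiag_card]
  -- final arithmetic
  set m := F.card with hm
  set a := 2 ^ (s - 2 * k) with ha2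
  have hexp : 2 ^ (s - k) = 2 ^ (k - 1) * (2 * a) := by
    rw [ha2, ← pow_succ', ← pow_add]
    congr 1
    omega
  have key : m * m - m ≤ m * 2 ^ (k - 1) - m := by
    have : m * m ≤ m * 2 ^ (k - 1) := Nat.mul_le_mul_left m hF
    omega
  -- combine
  have h1 : 2 * (m * (2 * 2 ^ (s - k))) ≤ 2 * B.card + (m * 2 ^ (k - 1) - m) * (4 * a) := by
    calc 2 * (m * (2 * 2 ^ (s - k))) ≤ 2 * B.card + (m * m - m) * (4 * a) := by
          rw [← hsum]; refine le_trans hbon ?_; rw [← hB]; omega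
      _ ≤ 2 * B.card + (m * 2 ^ (k - 1) - m) * (4 * a) := by
          exact Nat.add_le_add_left (Nat.mul_le_mul_right _ key) _
  rw [hexp] at h1 ⊢
  set K := 2 ^ (k - 1) with hK
  have hmm : m ≤ K := hF
  nlinarith [h1, Nat.sub_le (m * K) m]
end

section
/- Let g : ℕ → ℝ be any function with g(k) > 0 for all k and g(k) → 0 as k → ∞, and set N⁻(k) = ⌊2^{k/2} · k^{1/2} · g(k)⌋. Then the proportion of 2-colorings c : {1,...,N⁻(k)} → {0,1} (out of the 2^{N⁻(k)} total) that contain a monochromatic k-term arithmetic progression tends to 0 as k → ∞. Equivalently, the probability that a uniformly random 2-coloring of {1,...,N⁻(k)} contains a monochromatic k-term arithmetic progression approaches 0 as k → ∞. -/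
open Finset
open scoped Classical



/-- `P` is a `k`-term arithmetic progression contained in `{1, ..., n}`. -/
def IsKAP (n k : ℕ) (P : Finset ℕ) : Prop :=
  ∃ a d : ℕ, 1 ≤ a ∧ 1 ≤ d ∧ a + (k - 1) * d ≤ n ∧ P = AP a d k

/-- The coloring `c` of `{1, ..., n}` is constant on `P`. -/
def Mono {n : ℕ} (c : ↥(Finset.Icc 1 n) → Bool) (P : Finset ℕ) : Prop :=
  ∀ x y : ↥(Finset.Icc 1 n), (x : ℕ) ∈ P → (y : ℕ) ∈ P → c x = c y

/-- The coloring `c` of `{1, ..., n}` contains a monochromatic `k`-term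
arithmetic progression. -/
def HasMonoKAP (n k : ℕ) (c : ↥(Finset.Icc 1 n) → Bool) : Prop :=
  ∃ P : Finset ℕ, IsKAP n k P ∧ Mono c P

lemma AP_card (a d k : ℕ) (hd : 1 ≤ d) : (AP a d k).card = k := by
  rw [AP, Finset.card_image_of_injective _ (fun i j h => by
    have := Nat.add_left_cancel h
    exact Nat.eq_of_mul_eq_mul_right hd this), Finset.card_range]

lemma AP_subset (a d k N : ℕ) (ha : 1 ≤ a) (hN : a + (k - 1) * d ≤ N) :
    AP a d k ⊆ Finset.Icc 1 N := by
  intro x hx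
  simp only [AP, mem_image, mem_range] at hx
  obtain ⟨i, hi, rfl⟩ := hx
  refine mem_Icc.2 ⟨le_trans ha (Nat.le_add_right _ _), ?_⟩
  have : i * d ≤ (k - 1) * d := Nat.mul_le_mul_right d (by omega)
  omega

lemma card_const_colorings {α : Type*} [Fintype α] [DecidableEq α]
    (t : Finset α) (x0 : α) :
    (univ.filter (fun c : α → Bool => ∀ x ∈ t, c x = c x0)).card
      ≤ 2 ^ (Fintype.card α - t.card + 1) := by
  classical
  have h := Finset.card_le_card_of_injOn
    (f := fun c : α → Bool => ((fun x : ↥(tᶜ : Finset α) => c x), c x0))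
    (s := univ.filter (fun c : α → Bool => ∀ x ∈ t, c x = c x0))
    (t := (univ : Finset ((↥(tᶜ : Finset α) → Bool) × Bool)))
    (fun c _ => mem_univ _)
    (by
      intro c1 h1 c2 h2 heq
      simp only [mem_coe, mem_filter, mem_univ, true_and] at h1 h2
      simp only [Prod.mk.injEq] at heq
      obtain ⟨hf, hv⟩ := heq
      funext x
      by_cases hx : x ∈ t
      · rw [h1 x hx, h2 x hx, hv]
      · exact congrFun hf ⟨x, by simpa using hx⟩)
  calc (univ.filter (fun c : α → Bool => ∀ x ∈ t, c x = c x0)).card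
      ≤ (univ : Finset ((↥(tᶜ : Finset α) → Bool) × Bool)).card := h
    _ = 2 ^ (Fintype.card α - t.card + 1) := by
        rw [card_univ, Fintype.card_prod, Fintype.card_fun, Fintype.card_bool,
          Fintype.card_coe, card_compl, pow_succ]

lemma mono_filter_card_le (N k a d : ℕ) (hk0 : 1 ≤ k) (ha : 1 ≤ a) (hd : 1 ≤ d)
    (hN : a + (k - 1) * d ≤ N) :
    (univ.filter (fun c : ↥(Finset.Icc 1 N) → Bool => Mono c (AP a d k))).card
      ≤ 2 ^ (N - k + 1) := by
  classical
  set t : Finset ↥(Finset.Icc 1 N) :=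
    univ.filter (fun x => (x : ℕ) ∈ AP a d k) with ht
  have haP : a ∈ AP a d k := by
    simp only [AP, Finset.mem_image, Finset.mem_range]
    exact ⟨0, hk0, by ring⟩
  have haI : a ∈ Finset.Icc 1 N := AP_subset a d k N ha hN haP
  set x0 : ↥(Finset.Icc 1 N) := ⟨a, haI⟩ with hx0
  have hsub : univ.filter (fun c : ↥(Finset.Icc 1 N) → Bool => Mono c (AP a d k))
      ⊆ univ.filter (fun c => ∀ x ∈ t, c x = c x0) := by
    intro c hc
    simp only [mem_filter, mem_univ, true_and] at hc ⊢
    intro x hx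
    simp only [ht, mem_filter, mem_univ, true_and] at hx
    exact hc x x0 hx haP
  have hcard_t : t.card = k := by
    have himg : t.image (Subtype.val) = AP a d k := by
      ext m
      simp only [Finset.mem_image, ht, mem_filter, mem_univ, true_and]
      constructor
      · rintro ⟨x, hx, rfl⟩; exact hx
      · intro hm; exact ⟨⟨m, AP_subset a d k N ha hN hm⟩, hm, rfl⟩
    rw [← AP_card a d k hd, ← himg, Finset.card_image_of_injective _ Subtype.val_injective]
  calc _ ≤ (univ.filter (fun c : ↥(Finset.Icc 1 N) → Bool => ∀ x ∈ t, c x = c x0)).card :=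
        card_le_card hsub
    _ ≤ 2 ^ (Fintype.card ↥(Finset.Icc 1 N) - t.card + 1) := card_const_colorings t x0
    _ = 2 ^ (N - k + 1) := by
        rw [hcard_t, Fintype.card_coe, Nat.card_Icc, Nat.add_sub_cancel]

lemma bad_card_le (N k : ℕ) (hk : 2 ≤ k) :
    (univ.filter (fun c : ↥(Finset.Icc 1 N) → Bool => HasMonoKAP N k c)).card
      ≤ N * (N / (k - 1)) * 2 ^ (N - k + 1) := by
  classical
  set S : Finset (ℕ × ℕ) := ((Finset.Icc 1 N) ×ˢ (Finset.Icc 1 (N / (k - 1)))).filter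
      (fun p => p.1 + (k - 1) * p.2 ≤ N) with hS
  have hsub : univ.filter (fun c : ↥(Finset.Icc 1 N) → Bool => HasMonoKAP N k c)
      ⊆ S.biUnion (fun p => univ.filter (fun c => Mono c (AP p.1 p.2 k))) := by
    intro c hc
    simp only [mem_filter, mem_univ, true_and] at hc
    obtain ⟨P, ⟨a, d, ha, hd, hle, rfl⟩, hmono⟩ := hc
    have hk1 : 1 ≤ k - 1 := by omega
    have hdle : d ≤ N / (k - 1) := by
      rw [Nat.le_div_iff_mul_le (by omega)]
      calc d * (k - 1) = (k - 1) * d := Nat.mul_comm _ _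
        _ ≤ N := by omega
    refine Finset.mem_biUnion.2 ⟨(a, d), ?_, ?_⟩
    · simp only [hS, mem_filter, Finset.mem_product, Finset.mem_Icc]
      exact ⟨⟨⟨ha, by nlinarith [Nat.one_le_iff_ne_zero.1 hd]⟩, ⟨hd, hdle⟩⟩, hle⟩
    · simp only [mem_filter, mem_univ, true_and]
      exact hmono
  calc _ ≤ (S.biUnion (fun p => univ.filter
        (fun c : ↥(Finset.Icc 1 N) → Bool => Mono c (AP p.1 p.2 k)))).card :=
        card_le_card hsub
    _ ≤ ∑ p ∈ S, (univ.filter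
        (fun c : ↥(Finset.Icc 1 N) → Bool => Mono c (AP p.1 p.2 k))).card :=
        Finset.card_biUnion_le
    _ ≤ ∑ p ∈ S, 2 ^ (N - k + 1) := by
        refine Finset.sum_le_sum ?_
        intro p hp
        simp only [hS, mem_filter, Finset.mem_product, Finset.mem_Icc] at hp
        exact mono_filter_card_le N k p.1 p.2 (by omega) hp.1.1.1 hp.1.2.1 hp.2
    _ = S.card * 2 ^ (N - k + 1) := by rw [Finset.sum_const, smul_eq_mul]
    _ ≤ N * (N / (k - 1)) * 2 ^ (N - k + 1) := by
        have : S.card ≤ N * (N / (k - 1)) := by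
          calc S.card ≤ ((Finset.Icc 1 N) ×ˢ (Finset.Icc 1 (N / (k - 1)))).card :=
                card_filter_le _ _
            _ = N * (N / (k - 1)) := by
                rw [Finset.card_product, Nat.card_Icc, Nat.card_Icc, Nat.add_sub_cancel, Nat.add_sub_cancel]
        exact Nat.mul_le_mul_right _ this

/-- `N⁻(k) = ⌊2^(k/2) k^(1/2) g(k)⌋`. -/
noncomputable def Nminus (g : ℕ → ℝ) (k : ℕ) : ℕ :=
  ⌊(2 : ℝ) ^ ((k : ℝ) / 2) * (k : ℝ) ^ ((1 : ℝ) / 2) * g k⌋₊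

/-- If `g(k) → 0`, then the proportion of 2-colorings of `{1, ..., N⁻(k)}`
containing a monochromatic `k`-term arithmetic progression tends to `0`. -/
theorem prob_mono_kap_tendsto_zero (g : ℕ → ℝ) (hg0 : ∀ k, 0 < g k)
    (hg : Filter.Tendsto g Filter.atTop (nhds 0)) :
    Filter.Tendsto
      (fun k : ℕ =>
        (Nat.card {c : ↥(Finset.Icc 1 (Nminus g k)) → Bool //
            HasMonoKAP (Nminus g k) k c} : ℝ) / 2 ^ (Nminus g k))
      Filter.atTop (nhds 0) := by
  classical
  have hbound : Filter.Tendsto (fun k : ℕ => 4 * g k ^ 2) Filter.atTop (nhds 0) := by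
    have := (hg.mul hg).const_mul (4 : ℝ)
    simpa [pow_two, mul_assoc] using this
  refine squeeze_zero' ?_ ?_ hbound
  · filter_upwards [] with k
    positivity
  · filter_upwards [Filter.eventually_atTop.2 ⟨2, fun k hk => hk⟩] with k hk
    set N := Nminus g k with hN
    have hNle : (N : ℝ) ≤ 2 ^ ((k : ℝ) / 2) * (k : ℝ) ^ ((1 : ℝ) / 2) * g k := by
      exact Nat.floor_le (mul_nonneg (by positivity) (hg0 k).le)
    by_cases hkN : k ≤ N
    · -- main case
      have hcount : Nat.card {c : ↥(Finset.Icc 1 N) → Bool // HasMonoKAP N k c}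
          = (Finset.univ.filter
              (fun c : ↥(Finset.Icc 1 N) → Bool => HasMonoKAP N k c)).card := by
        rw [Nat.card_eq_fintype_card, Fintype.card_subtype]
      set K : ℝ := ((k - 1 : ℕ) : ℝ) with hKdef
      have hK1 : (1 : ℝ) ≤ ((k - 1 : ℕ) : ℝ) := by
        have : 1 ≤ k - 1 := by omega
        exact_mod_cast this
      have hK1' : (0 : ℝ) < ((k - 1 : ℕ) : ℝ) := lt_of_lt_of_le one_pos hK1
      have h2N : (2 : ℝ) ^ N = 2 ^ (N - k + 1) * 2 ^ (k - 1) := by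
        rw [← pow_add]; congr 1; omega
      have hsq : ((N : ℝ)) ^ 2 ≤ 2 ^ k * (k : ℝ) * g k ^ 2 := by
        have h1 : ((2 : ℝ) ^ ((k : ℝ) / 2)) ^ 2 = 2 ^ k := by
          rw [← Real.rpow_natCast ((2:ℝ) ^ ((k:ℝ)/2)) 2, ← Real.rpow_mul (by norm_num)]
          rw [show ((k:ℝ)/2 * ((2:ℕ):ℝ)) = ((k:ℕ):ℝ) by push_cast; ring]
          exact Real.rpow_natCast 2 k
        have h2 : ((k : ℝ) ^ ((1 : ℝ) / 2)) ^ 2 = (k : ℝ) := by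
          rw [← Real.rpow_natCast ((k:ℝ) ^ ((1:ℝ)/2)) 2, ← Real.rpow_mul (Nat.cast_nonneg k)]
          norm_num
        calc ((N : ℝ)) ^ 2 ≤ (2 ^ ((k : ℝ) / 2) * (k : ℝ) ^ ((1 : ℝ) / 2) * g k) ^ 2 := by
              have hN0 : (0:ℝ) ≤ (N:ℝ) := Nat.cast_nonneg _
              exact pow_le_pow_left₀ hN0 hNle 2
          _ = ((2 : ℝ) ^ ((k : ℝ) / 2)) ^ 2 * ((k : ℝ) ^ ((1 : ℝ) / 2)) ^ 2 * g k ^ 2 := by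
              ring
          _ = 2 ^ k * (k : ℝ) * g k ^ 2 := by rw [h1, h2]
      calc (Nat.card {c : ↥(Finset.Icc 1 N) → Bool // HasMonoKAP N k c} : ℝ) / 2 ^ N
          ≤ ((N * (N / (k - 1)) * 2 ^ (N - k + 1) : ℕ) : ℝ) / 2 ^ N := by
            gcongr
            exact_mod_cast hcount ▸ bad_card_le N k hk
        _ = (N : ℝ) * ((N / (k - 1) : ℕ) : ℝ) * (2 : ℝ) ^ (N - k + 1) / 2 ^ N := by
            push_cast; ring
        _ ≤ (N : ℝ) * ((N : ℝ) / ((k - 1 : ℕ) : ℝ)) * (2 : ℝ) ^ (N - k + 1) / 2 ^ N := by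
            gcongr
            exact Nat.cast_div_le
        _ = (N : ℝ) ^ 2 / (((k - 1 : ℕ) : ℝ) * 2 ^ (k - 1)) := by
            have key : ∀ (a A B C : ℝ), C ≠ 0 → A ≠ 0 → B ≠ 0 →
                a * (a / C) * A / (A * B) = a ^ 2 / (C * B) := by
              intro a A B C hC hA hB
              field_simp
            rw [h2N]
            exact key _ _ _ _ (ne_of_gt hK1') (by positivity) (by positivity)
        _ ≤ (2 ^ k * (k : ℝ) * g k ^ 2) / (((k - 1 : ℕ) : ℝ) * 2 ^ (k - 1)) := by
            gcongr
        _ ≤ 4 * g k ^ 2 := by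
            rw [div_le_iff₀ (by positivity)]
            have h2k : (2 : ℝ) ^ k = 2 * 2 ^ (k - 1) := by
              rw [← pow_succ']; congr 1; omega
            have hcast : ((k - 1 : ℕ) : ℝ) = (k : ℝ) - 1 := by
              have : (1:ℕ) ≤ k := by omega
              push_cast [Nat.cast_sub this]
              ring
            rw [h2k, hcast]
            have hgk : (0 : ℝ) ≤ g k ^ 2 := sq_nonneg _
            have hkk : (k : ℝ) ≤ 2 * ((k : ℝ) - 1) := by
              have : (2 : ℝ) ≤ (k : ℝ) := by exact_mod_cast hk
              linarith
            have hp : (0 : ℝ) < 2 ^ (k - 1) := by positivity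
            nlinarith [mul_le_mul_of_nonneg_left hkk hgk]
    · -- no k-AP fits: numerator is zero
      have : IsEmpty {c : ↥(Finset.Icc 1 N) → Bool // HasMonoKAP N k c} := by
        constructor
        rintro ⟨c, P, ⟨a, d, ha, hd, hle, rfl⟩, -⟩
        have : k - 1 ≤ (k - 1) * d := Nat.le_mul_of_pos_right _ (by omega)
        omega
      rw [Nat.card_of_isEmpty]
      norm_num
      positivity
end
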